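/- (Fault probability after n/4 operations.) There exists a constant γ > 1 (γ = 3 suffices) with the following property. Let (Ω, P) be a probability space, U a finite type, V a linear order, and h : Ω → (U → V) a random hash function; for ω ∈ Ω let f_ω : U → V × U be x ↦ (h(ω)(x), x) with V × U ordered lexicographically. Let A ⊆ U be finite with |A| = n ≥ 2, let ℓ be a natural number with ℓ ≥ γ · log₂ n and ℓ ≤ n, let 0 ≤ ε ≤ 1, and assume that for every X ⊆ A with |X| = ℓ, P{ω : ∀ x ∈ X, ∀ y ∈ A \ X, f_ω(x) < f_ω(y)} ≤ (1+ε) / C(|A|, ℓ). Then for every C ⊆ A with |C| ≤ n/4, P{ω : Smallest(f_ω(A), ℓ) ⊆ f_ω(C)} ≤ 1/n⁵. -/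

import Mathlib

open MeasureTheory

def Smallest {L : Type*} [LinearOrder L] (S : Finset L) (r : ℕ) : Finset L :=
  ((S.sort (· ≤ ·)).take r).toFinset

lemma Smallest_subset {L : Type*} [LinearOrder L] (S : Finset L) (r : ℕ) :
    Smallest S r ⊆ S := by
  intro a ha
  rw [Smallest, List.mem_toFinset] at ha
  exact (Finset.mem_sort _).1 (List.mem_of_mem_take ha)

lemma Smallest_card {L : Type*} [LinearOrder L] (S : Finset L) (r : ℕ) :
    (Smallest S r).card = min r S.card := by
  rw [Smallest, List.card_toFinset,
    List.Nodup.dedup ((List.take_sublist _ _).nodup (S.sort_nodup _)),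
    List.length_take, Finset.length_sort]

lemma Smallest_lt {L : Type*} [LinearOrder L] (S : Finset L) (r : ℕ) {a b : L}
    (ha : a ∈ Smallest S r) (hb : b ∈ S) (hb' : b ∉ Smallest S r) : a < b := by
  have hs := (S.sortedLT_sort).pairwise
  have hmem : b ∈ S.sort (· ≤ ·) := (Finset.mem_sort _).2 hb
  rw [Smallest, List.mem_toFinset] at ha hb'
  have hbd : b ∈ (S.sort (· ≤ ·)).drop r := by
    rcases List.mem_append.1 ((List.take_append_drop r (S.sort (· ≤ ·))).symm ▸ hmem) with h | h
    · exact absurd h hb'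
    · exact h
  have hpair : ((S.sort (· ≤ ·)).take r ++ (S.sort (· ≤ ·)).drop r).Pairwise (· < ·) := by
    rw [List.take_append_drop]; exact hs
  exact (List.pairwise_append.1 hpair).2.2 a ha b hbd

lemma four_pow_choose_le (c ℓ : ℕ) : 4 ^ ℓ * c.choose ℓ ≤ (4 * c).choose ℓ := by
  have key : 4 ^ ℓ * c.descFactorial ℓ ≤ (4 * c).descFactorial ℓ := by
    have h4 : (4:ℕ) ^ ℓ = ∏ _i ∈ Finset.range ℓ, 4 := by
      rw [Finset.prod_const, Finset.card_range]
    rw [Nat.descFactorial_eq_prod_range, Nat.descFactorial_eq_prod_range, h4,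
      ← Finset.prod_mul_distrib]
    exact Finset.prod_le_prod' fun i _ => by omega
  rw [Nat.descFactorial_eq_factorial_mul_choose, Nat.descFactorial_eq_factorial_mul_choose] at key
  have := Nat.factorial_pos ℓ
  calc 4 ^ ℓ * c.choose ℓ = (ℓ.factorial * (4 ^ ℓ * c.choose ℓ)) / ℓ.factorial := by
        rw [Nat.mul_div_cancel_left _ this]
    _ ≤ (ℓ.factorial * (4 * c).choose ℓ) / ℓ.factorial := by
        apply Nat.div_le_div_right
        calc ℓ.factorial * (4 ^ ℓ * c.choose ℓ) = 4 ^ ℓ * (ℓ.factorial * c.choose ℓ) := by ring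
          _ ≤ _ := key
    _ = (4 * c).choose ℓ := Nat.mul_div_cancel_left _ this

/-- **Fault probability after `n/4` operations.**  There is a constant `γ > 1` such
that for any random hash function `h : Ω → (U → V)` (writing
`f_ω x = (h ω x, x) ∈ V ×ₗ U`, lexicographic order), any finite `A ⊆ U` with
`|A| = n ≥ 2`, any `ℓ` with `γ · log₂ n ≤ ℓ ≤ n`, any `0 ≤ ε ≤ 1` such that the
`(ε,ℓ)`-min-wise upper bound holds for all `ℓ`-subsets of `A`, and any `C ⊆ A`
with `|C| ≤ n/4`, the probability that all `ℓ` smallest hashed pairs of `A` lie in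
`f_ω(C)` is at most `1/n⁵`. -/
theorem fault_probability_quarter :
    ∃ γ : ℝ, 1 < γ ∧
      ∀ (Ω U V : Type) [MeasurableSpace Ω] [Fintype U] [LinearOrder U] [LinearOrder V]
        (P : Measure Ω) [IsProbabilityMeasure P]
        (h : Ω → U → V) (A : Finset U) (n ℓ : ℕ) (ε : ℝ),
        A.card = n → 2 ≤ n →
        γ * Real.logb 2 (n : ℝ) ≤ (ℓ : ℝ) → ℓ ≤ n →
        0 ≤ ε → ε ≤ 1 →
        (∀ X ⊆ A, X.card = ℓ →
          P {ω | ∀ x ∈ X, ∀ y ∈ A \ X, toLex (h ω x, x) < toLex (h ω y, y)}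
            ≤ ENNReal.ofReal ((1 + ε) / (A.card.choose ℓ : ℝ))) →
        ∀ C ⊆ A, (C.card : ℝ) ≤ (n : ℝ) / 4 →
          P {ω | Smallest (A.image fun x => toLex (h ω x, x)) ℓ ⊆
                C.image fun x => toLex (h ω x, x)}
            ≤ ENNReal.ofReal (1 / (n : ℝ) ^ 5) := by
  refine ⟨3, by norm_num, ?_⟩
  intro Ω U V _ _ _ _ P _ h A n ℓ ε hcard hn hγ hℓn hε0 hε1 hmin C hCA hC4
  -- injectivity of f for any ω
  have hfinj : ∀ ω : Ω, Function.Injective (fun x : U => toLex (h ω x, x)) := by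
    intro ω a b hab
    exact congrArg (fun p : Lex (V × U) => (ofLex p).2) hab
  -- Step 1: inclusion into a finite union
  have hsub : {ω | Smallest (A.image fun x => toLex (h ω x, x)) ℓ ⊆
        C.image fun x => toLex (h ω x, x)} ⊆
      ⋃ X ∈ (C.powersetCard ℓ : Finset (Finset U)),
        {ω | ∀ x ∈ X, ∀ y ∈ A \ X, toLex (h ω x, x) < toLex (h ω y, y)} := by
    intro ω hω
    simp only [Set.mem_setOf_eq] at hω
    set f : U → Lex (V × U) := fun x => toLex (h ω x, x) with hf
    have hinj := hfinj ω
    set S := A.image f with hS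
    set Sm := Smallest S ℓ with hSm
    have hSmcard : Sm.card = ℓ := by
      rw [hSm, Smallest_card, hS, Finset.card_image_of_injective _ hinj, hcard]
      exact min_eq_left hℓn
    set X := C.filter (fun x => f x ∈ Sm) with hX
    have hXC : X ⊆ C := Finset.filter_subset _ _
    have himg : X.image f = Sm := by
      apply Finset.Subset.antisymm
      · intro s hs
        obtain ⟨x, hx, rfl⟩ := Finset.mem_image.1 hs
        exact (Finset.mem_filter.1 hx).2
      · intro s hs
        obtain ⟨x, hx, rfl⟩ := Finset.mem_image.1 (hω hs)
        exact Finset.mem_image.2 ⟨x, Finset.mem_filter.2 ⟨hx, hs⟩, rfl⟩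
    have hXcard : X.card = ℓ := by
      rw [← hSmcard, ← himg, Finset.card_image_of_injective _ hinj]
    refine Set.mem_biUnion (Finset.mem_coe.2 (Finset.mem_powersetCard.2 ⟨hXC, hXcard⟩)) ?_
    simp only [Set.mem_setOf_eq]
    intro x hx y hy
    have hfx : f x ∈ Sm := (Finset.mem_filter.1 hx).2
    obtain ⟨hyA, hyX⟩ := Finset.mem_sdiff.1 hy
    have hfyS : f y ∈ S := Finset.mem_image_of_mem _ hyA
    have hfy : f y ∉ Sm := by
      intro hc
      obtain ⟨x', hx', hfx'⟩ := Finset.mem_image.1 (hω hc)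
      have : x' = y := hinj hfx'
      subst this
      exact hyX (Finset.mem_filter.2 ⟨hx', hc⟩)
    exact Smallest_lt S ℓ hfx hfyS hfy
  -- positivity facts
  have hn0 : (0 : ℝ) < n := by positivity
  have hNn : 0 < n.choose ℓ := Nat.choose_pos hℓn
  have hNR : (0 : ℝ) < (n.choose ℓ : ℝ) := by exact_mod_cast hNn
  -- Step 2: 4^ℓ ≥ n^6 (real)
  have hpow : (n : ℝ) ^ 6 ≤ (4 : ℝ) ^ ℓ := by
    have h2 : (n : ℝ) ^ 6 = (2 : ℝ) ^ (6 * Real.logb 2 n) := by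
      rw [mul_comm, Real.rpow_mul (by norm_num), Real.rpow_logb (by norm_num) (by norm_num) hn0]
      rw [show (6:ℝ) = ((6:ℕ):ℝ) by norm_num, Real.rpow_natCast]
    have h3 : (6 : ℝ) * Real.logb 2 n ≤ (2 * ℓ : ℕ) := by
      push_cast; nlinarith [hγ]
    calc (n : ℝ) ^ 6 = (2 : ℝ) ^ (6 * Real.logb 2 n) := h2
      _ ≤ (2 : ℝ) ^ ((2 * ℓ : ℕ) : ℝ) := by
          exact Real.rpow_le_rpow_of_exponent_le (by norm_num) h3
      _ = (2 : ℝ) ^ (2 * ℓ) := Real.rpow_natCast 2 (2 * ℓ)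
      _ = (4 : ℝ) ^ ℓ := by rw [pow_mul]; norm_num
  -- Step 3: the union bound and final computation
  have hreal : (C.card.choose ℓ : ℝ) * ((1 + ε) / (n.choose ℓ : ℝ)) ≤ 1 / (n : ℝ) ^ 5 := by
    have h4c : 4 * C.card ≤ n := by
      have : ((4 * C.card : ℕ) : ℝ) ≤ n := by push_cast; linarith
      exact_mod_cast this
    have hkey : (4 : ℕ) ^ ℓ * C.card.choose ℓ ≤ n.choose ℓ :=
      le_trans (four_pow_choose_le _ _) (Nat.choose_le_choose ℓ h4c)
    have hkeyR : (4 : ℝ) ^ ℓ * (C.card.choose ℓ : ℝ) ≤ (n.choose ℓ : ℝ) := by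
      exact_mod_cast hkey
    have h4pos : (0 : ℝ) < (4 : ℝ) ^ ℓ := by positivity
    have hcc : (C.card.choose ℓ : ℝ) ≤ (n.choose ℓ : ℝ) / (4 : ℝ) ^ ℓ := by
      rw [le_div_iff₀ h4pos]; nlinarith
    have hn5 : (0 : ℝ) < (n : ℝ) ^ 5 := by positivity
    calc (C.card.choose ℓ : ℝ) * ((1 + ε) / (n.choose ℓ : ℝ))
        ≤ ((n.choose ℓ : ℝ) / (4 : ℝ) ^ ℓ) * (2 / (n.choose ℓ : ℝ)) := by
          apply mul_le_mul hcc ?_ (by positivity) (by positivity)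
          gcongr
          · linarith
      _ = 2 / (4 : ℝ) ^ ℓ := by field_simp
      _ ≤ 1 / (n : ℝ) ^ 5 := by
          rw [div_le_div_iff₀ h4pos hn5]
          have : 2 * (n : ℝ) ^ 5 ≤ (n : ℝ) ^ 6 := by
            have h2n : (2 : ℝ) ≤ n := by exact_mod_cast hn
            nlinarith [pow_pos hn0 5]
          linarith
  calc P {ω | Smallest (A.image fun x => toLex (h ω x, x)) ℓ ⊆
          C.image fun x => toLex (h ω x, x)}
      ≤ P (⋃ X ∈ (C.powersetCard ℓ : Finset (Finset U)),
          {ω | ∀ x ∈ X, ∀ y ∈ A \ X, toLex (h ω x, x) < toLex (h ω y, y)}) :=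
        measure_mono hsub
    _ ≤ ∑ X ∈ C.powersetCard ℓ,
          P {ω | ∀ x ∈ X, ∀ y ∈ A \ X, toLex (h ω x, x) < toLex (h ω y, y)} :=
        measure_biUnion_finset_le _ _
    _ ≤ ∑ _X ∈ C.powersetCard ℓ, ENNReal.ofReal ((1 + ε) / (n.choose ℓ : ℝ)) := by
        apply Finset.sum_le_sum
        intro X hX
        obtain ⟨hXC, hXcard⟩ := Finset.mem_powersetCard.1 hX
        have := hmin X (hXC.trans hCA) hXcard
        rwa [hcard] at this
    _ = (C.card.choose ℓ : ℕ) * ENNReal.ofReal ((1 + ε) / (n.choose ℓ : ℝ)) := by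
        rw [Finset.sum_const, Finset.card_powersetCard, nsmul_eq_mul]
    _ ≤ ENNReal.ofReal (1 / (n : ℝ) ^ 5) := by
        rw [← ENNReal.ofReal_natCast (C.card.choose ℓ), ← ENNReal.ofReal_mul (by positivity)]
        exact ENNReal.ofReal_le_ofReal hreal
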